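/- arXiv:2007.12983 — 2 statements merged into one kernel-verified Lean document; each statement's English description precedes it below -/
import Mathlib

section
/- If q lies on the affine segment between p and r in ℝ⁴ and the squared Minkowski intervals η²(p,q) and η²(q,r) are both nonpositive (spacelike or lightlike), then η²(p,r) ≤ η²(p,q) and η²(p,r) ≤ η²(q,r); i.e., extending a spacelike segment yields a segment that is 'shorter' (more negative squared interval) than either piece. -/
def Bmink (u v : Fin 4 → ℝ) : ℝ := u 3 * v 3 - u 0 * v 0 - u 1 * v 1 - u 2 * v 2
def eta2 (p q : Fin 4 → ℝ) : ℝ := Bmink (p - q) (p - q)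

theorem spacelike_extension_shorter (p q r : Fin 4 → ℝ)
    (hbet : ∃ l : ℝ, 0 ≤ l ∧ l ≤ 1 ∧ q = p + l • (r - p))
    (hpq : eta2 p q ≤ 0) (hqr : eta2 q r ≤ 0) :
    eta2 p r ≤ eta2 p q ∧ eta2 p r ≤ eta2 q r := by
  obtain ⟨l, hl0, hl1, hq⟩ := hbet
  subst hq
  simp only [eta2, Bmink, Pi.sub_apply, Pi.add_apply, Pi.smul_apply, smul_eq_mul] at *
  constructor <;> nlinarith [sq_nonneg l, sq_nonneg (1 - l), sq_nonneg (l * (1 - l)),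
    mul_nonneg hl0 (sub_nonneg.2 hl1)]
end

section
/- A bijection g : ℝ⁴ → ℝ⁴ with g(0) = 0 that preserves the squared Minkowski interval (η²(g(a), g(b)) = η²(a,b) for all a, b) is linear and is an element of the Lorentz group, i.e., B(g(a), g(b)) = B(a,b) for all a, b. -/
lemma eta2_expand (p q : Fin 4 → ℝ) :
    eta2 p q = Bmink p p - 2 * Bmink p q + Bmink q q := by
  simp [eta2, Bmink]; ring

lemma Bmink_zero_of_forall (v : Fin 4 → ℝ) (hv : ∀ w, Bmink v w = 0) : v = 0 := by
  funext i
  fin_cases i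
  · have := hv ![1,0,0,0]; simp [Bmink] at this; simpa using this
  · have := hv ![0,1,0,0]; simp [Bmink] at this; simpa using this
  · have := hv ![0,0,1,0]; simp [Bmink] at this; simpa using this
  · have := hv ![0,0,0,1]; simp [Bmink] at this; simpa using this

theorem interval_preserving_is_lorentz (g : (Fin 4 → ℝ) → (Fin 4 → ℝ))
    (hg : Function.Bijective g) (h0 : g 0 = 0)
    (h : ∀ a b : Fin 4 → ℝ, eta2 (g a) (g b) = eta2 a b) :
    IsLinearMap ℝ g ∧ ∀ a b : Fin 4 → ℝ, Bmink (g a) (g b) = Bmink a b := by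
  have hBself : ∀ a, Bmink (g a) (g a) = Bmink a a := by
    intro a
    have := h a 0
    rw [h0] at this
    simpa [eta2, Bmink] using this
  have hB : ∀ a b, Bmink (g a) (g b) = Bmink a b := by
    intro a b
    have h1 := h a b
    rw [eta2_expand, eta2_expand, hBself a, hBself b] at h1
    linarith
  refine ⟨?_, hB⟩
  constructor
  · intro a b
    have key : ∀ w, Bmink (g (a + b) - (g a + g b)) w = 0 := by
      intro w
      obtain ⟨c, rfl⟩ := hg.2 w
      have e1 : Bmink (g (a + b) - (g a + g b)) (g c)
          = Bmink (g (a + b)) (g c) - Bmink (g a) (g c) - Bmink (g b) (g c) := by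
        simp [Bmink]; ring
      have e2 : Bmink (a + b) c = Bmink a c + Bmink b c := by
        simp [Bmink]; ring
      rw [e1, hB, hB, hB, e2]; ring
    have := Bmink_zero_of_forall _ key
    have := sub_eq_zero.mp this
    exact this
  · intro c a
    have key : ∀ w, Bmink (g (c • a) - c • g a) w = 0 := by
      intro w
      obtain ⟨d, rfl⟩ := hg.2 w
      have e1 : Bmink (g (c • a) - c • g a) (g d)
          = Bmink (g (c • a)) (g d) - c * Bmink (g a) (g d) := by
        simp [Bmink]; ring
      have e2 : Bmink (c • a) d = c * Bmink a d := by
        simp [Bmink]; ring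
      rw [e1, hB, hB, e2]; ring
    have := Bmink_zero_of_forall _ key
    exact sub_eq_zero.mp this
end
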